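/- Let X, Y be topological spaces, Φ : X → 2^Y a multifunction, u : Gr(Φ) → ℝ∪{±∞}, and x ∈ Dom(Φ). The value function u*(z) = inf_{y ∈ Φ(z)} u(z,y) is continuous at x and the infimum at x is attained if and only if u is feasible path transfer upper semicontinuous at x and lower min-semicontinuous at x. -/
import Mathlib


open Filter Topology Set

/-- The value function `z ↦ ⨅ y ∈ Φ z, u z y` is continuous (both lower and upper
semicontinuous) at `x` and its infimum at `x` is attained, if and only if `u` is feasible path
transfer upper semicontinuous at `x` and lower min-semicontinuous at `x`. -/
theorem stmt9 {X Y : Type*} [TopologicalSpace X] [TopologicalSpace Y]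
    (Φ : X → Set Y) (u : X → Y → EReal) (x : X) (hx : (Φ x).Nonempty) :
    (LowerSemicontinuousAt (fun z => ⨅ y ∈ Φ z, u z y) x ∧
      UpperSemicontinuousAt (fun z => ⨅ y ∈ Φ z, u z y) x ∧
      ∃ y ∈ Φ x, u x y = ⨅ y' ∈ Φ x, u x y') ↔
    ((∀ y ∈ Φ x, ∀ γ : ℝ, u x y < (γ : EReal) →
        ∀ᶠ x' in 𝓝 x, ∃ y' ∈ Φ x', u x' y' < (γ : EReal)) ∧
      (∃ ys ∈ Φ x, ∀ γ : ℝ, (γ : EReal) < u x ys →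
        ∀ᶠ x' in 𝓝 x, ∀ y' ∈ Φ x', (γ : EReal) < u x' y')) := by
  constructor
  · rintro ⟨hlsc, husc, y₀, hy₀, hattain⟩
    constructor
    · intro y hy γ hγ
      have h1 : (⨅ y ∈ Φ x, u x y) < (γ : EReal) :=
        lt_of_le_of_lt (iInf₂_le y hy) hγ
      filter_upwards [husc _ h1] with x' hx'
      simpa using (iInf_lt_iff.mp hx').imp fun y' h => iInf_lt_iff.mp h
    · refine ⟨y₀, hy₀, fun γ hγ => ?_⟩
      rw [hattain] at hγ
      filter_upwards [hlsc _ hγ] with x' hx' y' hy'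
      exact lt_of_lt_of_le hx' (iInf₂_le y' hy')
  · rintro ⟨htu, ys, hys, hlm⟩
    have hattain : u x ys = ⨅ y' ∈ Φ x, u x y' := by
      refine le_antisymm ?_ (iInf₂_le ys hys)
      by_contra hlt
      push_neg at hlt
      obtain ⟨γ, hγ1, hγ2⟩ := EReal.exists_between_coe_real hlt
      have := (hlm γ hγ2).self_of_nhds
      have h2 : (γ : EReal) ≤ ⨅ y' ∈ Φ x, u x y' :=
        le_iInf₂ fun y' hy' => (this y' hy').le
      exact absurd (lt_of_le_of_lt h2 hγ1) (lt_irrefl _)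
    refine ⟨?_, ?_, ys, hys, hattain⟩
    · intro b hb
      simp only at hb
      rw [← hattain] at hb
      obtain ⟨γ, hγ1, hγ2⟩ := EReal.exists_between_coe_real hb
      filter_upwards [hlm γ hγ2] with x' hx'
      exact lt_of_lt_of_le hγ1 (le_iInf₂ fun y' hy' => (hx' y' hy').le)
    · intro b hb
      simp only at hb
      obtain ⟨y, hy⟩ := iInf_lt_iff.mp hb
      obtain ⟨hy, hyb⟩ : ∃ h : y ∈ Φ x, u x y < b := by
        obtain ⟨h, hh⟩ := iInf_lt_iff.mp hy; exact ⟨h, hh⟩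
      obtain ⟨γ, hγ1, hγ2⟩ := EReal.exists_between_coe_real hyb
      filter_upwards [htu y hy γ hγ1] with x' ⟨y', hy', hlt⟩
      exact lt_of_le_of_lt (iInf₂_le y' hy') (hlt.trans hγ2)
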